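/- Let G be a group acting on a set X, and let M, N ⊆ X be commensurated subsets that are commensurate to each other. Then the transfer characters agree: tr_M(g) = tr_N(g) for all g ∈ G. -/
import Mathlib


open Pointwise

private lemma defect_cocycle {X : Type*} (A B C : Set X)
    (hAB : (symmDiff A B).Finite) (hBC : (symmDiff B C).Finite) :
    (((A \ C).ncard : ℤ) - ((C \ A).ncard : ℤ)) =
      (((A \ B).ncard : ℤ) - ((B \ A).ncard : ℤ)) +
        (((B \ C).ncard : ℤ) - ((C \ B).ncard : ℤ)) := by
  have hfin : ((A ∪ B ∪ C) \ (A ∩ B ∩ C)).Finite := by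
    apply Set.Finite.subset (hAB.union hBC)
    intro x hx
    simp only [Set.mem_diff, Set.mem_union, Set.mem_inter_iff, not_and] at hx
    simp only [Set.mem_union, Set.mem_symmDiff]
    by_cases hA : x ∈ A <;> by_cases hB : x ∈ B <;> by_cases hC : x ∈ C <;> tauto
  have fin : ∀ u v w : Set X, (u ∩ v ∩ w ⊆ (A ∪ B ∪ C) \ (A ∩ B ∩ C)) →
      (u ∩ v ∩ w).Finite := fun _ _ _ h => hfin.subset h
  have f1 : (A ∩ B ∩ Cᶜ).Finite := fin _ _ _ (by intro x hx; constructor <;>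
    [left; skip] <;> simp_all <;> tauto)
  have f2 : (A ∩ Bᶜ ∩ C).Finite := fin _ _ _ (by intro x hx; constructor <;>
    [left; skip] <;> simp_all <;> tauto)
  have f3 : (A ∩ Bᶜ ∩ Cᶜ).Finite := fin _ _ _ (by intro x hx; constructor <;>
    [left; skip] <;> simp_all <;> tauto)
  have f4 : (Aᶜ ∩ B ∩ C).Finite := fin _ _ _ (by intro x hx; constructor <;>
    [skip; skip] <;> simp_all <;> tauto)
  have f5 : (Aᶜ ∩ B ∩ Cᶜ).Finite := fin _ _ _ (by intro x hx; constructor <;>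
    [skip; skip] <;> simp_all <;> tauto)
  have f6 : (Aᶜ ∩ Bᶜ ∩ C).Finite := fin _ _ _ (by intro x hx; constructor <;>
    [skip; skip] <;> simp_all <;> tauto)
  have key : ∀ (S T u v : Set X), S \ T = u ∪ v → Disjoint u v → u.Finite → v.Finite →
      ((S \ T).ncard : ℤ) = u.ncard + v.ncard := by
    intro S T u v he hd hu hv
    rw [he, Set.ncard_union_eq hd hu hv]; push_cast; ring
  have dAC : A \ C = (A ∩ B ∩ Cᶜ) ∪ (A ∩ Bᶜ ∩ Cᶜ) := by
    ext x; simp only [Set.mem_diff, Set.mem_union, Set.mem_inter_iff, Set.mem_compl_iff]; tauto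
  have dCA : C \ A = (Aᶜ ∩ B ∩ C) ∪ (Aᶜ ∩ Bᶜ ∩ C) := by
    ext x; simp only [Set.mem_diff, Set.mem_union, Set.mem_inter_iff, Set.mem_compl_iff]; tauto
  have dAB : A \ B = (A ∩ Bᶜ ∩ C) ∪ (A ∩ Bᶜ ∩ Cᶜ) := by
    ext x; simp only [Set.mem_diff, Set.mem_union, Set.mem_inter_iff, Set.mem_compl_iff]; tauto
  have dBA : B \ A = (Aᶜ ∩ B ∩ C) ∪ (Aᶜ ∩ B ∩ Cᶜ) := by
    ext x; simp only [Set.mem_diff, Set.mem_union, Set.mem_inter_iff, Set.mem_compl_iff]; tauto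
  have dBC : B \ C = (A ∩ B ∩ Cᶜ) ∪ (Aᶜ ∩ B ∩ Cᶜ) := by
    ext x; simp only [Set.mem_diff, Set.mem_union, Set.mem_inter_iff, Set.mem_compl_iff]; tauto
  have dCB : C \ B = (A ∩ Bᶜ ∩ C) ∪ (Aᶜ ∩ Bᶜ ∩ C) := by
    ext x; simp only [Set.mem_diff, Set.mem_union, Set.mem_inter_iff, Set.mem_compl_iff]; tauto
  have disj : ∀ (u v : Set X), (∀ x, x ∈ u → x ∈ v → False) → Disjoint u v := by
    intro u v h
    rw [Set.disjoint_left]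
    intro x hx hy
    exact h x hx hy
  have dj : ∀ u₁ u₂ w₁ v₁ v₂ w₂ : Set X, Disjoint w₁ w₂ →
      Disjoint (u₁ ∩ u₂ ∩ w₁) (v₁ ∩ v₂ ∩ w₂) := by
    intro u₁ u₂ w₁ v₁ v₂ w₂ h
    exact disj _ _ fun x hx hy => Set.disjoint_left.mp h hx.2 hy.2
  have dBBc : ∀ S : Set X, Disjoint S Sᶜ := fun S => disjoint_compl_right
  have dj' : ∀ u₁ w₁ u₂ v₁ w₂ v₂ : Set X, Disjoint w₁ w₂ →
      Disjoint (u₁ ∩ w₁ ∩ u₂) (v₁ ∩ w₂ ∩ v₂) := by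
    intro u₁ w₁ u₂ v₁ w₂ v₂ h
    exact disj _ _ fun x hx hy => Set.disjoint_left.mp h hx.1.2 hy.1.2
  rw [key _ _ _ _ dAC (dj' _ _ _ _ _ _ (dBBc B)) f1 f3,
    key _ _ _ _ dCA (dj' _ _ _ _ _ _ (dBBc B)) f4 f6,
    key _ _ _ _ dAB (dj _ _ _ _ _ _ (dBBc C)) f2 f3,
    key _ _ _ _ dBA (dj _ _ _ _ _ _ (dBBc C)) f4 f5,
    key _ _ _ _ dBC (disj _ _ fun x hx hy => hy.1.1 hx.1.1) f1 f5,
    key _ _ _ _ dCB (disj _ _ fun x hx hy => hy.1.1 hx.1.1) f2 f6]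
  ring

/-- If `M` and `N` are commensurated subsets for a `G`-action on `X` that are
commensurate to each other, then their transfer characters agree:
`tr_M(g) = tr_N(g)` for all `g ∈ G`. -/
theorem transfer_char_commensurate_eq {G X : Type*} [Group G] [MulAction G X]
    (M N : Set X)
    (hM : ∀ g : G, (symmDiff M (g • M)).Finite)
    (hN : ∀ g : G, (symmDiff N (g • N)).Finite)
    (hMN : (symmDiff M N).Finite) :
    ∀ g : G,
      (((M \ (g⁻¹ • M)).ncard : ℤ) - (((g⁻¹ • M) \ M).ncard : ℤ)) =
        (((N \ (g⁻¹ • N)).ncard : ℤ) - (((g⁻¹ • N) \ N).ncard : ℤ)) := by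
  intro g
  have hgMN : (symmDiff (g⁻¹ • M) (g⁻¹ • N)).Finite := by
    rw [← Set.smul_set_symmDiff]
    exact hMN.image _
  have e1 := defect_cocycle M N (g⁻¹ • N) hMN (hN g⁻¹)
  have e2 := defect_cocycle M (g⁻¹ • M) (g⁻¹ • N) (hM g⁻¹) hgMN
  have e3 : (((g⁻¹ • M) \ (g⁻¹ • N)).ncard : ℤ) - (((g⁻¹ • N) \ (g⁻¹ • M)).ncard : ℤ)
      = ((M \ N).ncard : ℤ) - ((N \ M).ncard : ℤ) := by
    rw [← Set.smul_set_sdiff (a := g⁻¹), ← Set.smul_set_sdiff (a := g⁻¹),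
      Set.ncard_smul_set, Set.ncard_smul_set]
  omega
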